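/- If S ∈ ℝ^{d₁×d₂} satisfies the matrix CUR conditions, i.e., C = X(:,J), R = X(I,:), U = X(I,J), and rank(U) = rank(X), then X = C U⁺ R, where U⁺ denotes the Moore–Penrose pseudoinverse. -/

import Mathlib

open Matrix

/-- `B` is the Moore–Penrose pseudoinverse of `A`. -/
def IsMoorePenroseInv {m n : Type*} [Fintype m] [Fintype n]
    (A : Matrix m n ℝ) (B : Matrix n m ℝ) : Prop :=
  A * B * A = A ∧ B * A * B = B ∧ (A * B)ᵀ = A * B ∧ (B * A)ᵀ = B * A

/-- Matrix CUR decomposition: if `U = X(I,J)` has the same rank as `X`, then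
`X = C U⁺ R` where `C = X(:,J)` and `R = X(I,:)`. -/
theorem matrix_CUR {d₁ d₂ : ℕ} (X : Matrix (Fin d₁) (Fin d₂) ℝ)
    (I : Finset (Fin d₁)) (J : Finset (Fin d₂))
    (C : Matrix (Fin d₁) {j // j ∈ J} ℝ)
    (R : Matrix {i // i ∈ I} (Fin d₂) ℝ)
    (U : Matrix {i // i ∈ I} {j // j ∈ J} ℝ)
    (hC : ∀ i j, C i j = X i j.1)
    (hR : ∀ i j, R i j = X i.1 j)
    (hU : ∀ i j, U i j = X i.1 j.1)
    (Up : Matrix {j // j ∈ J} {i // i ∈ I} ℝ)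
    (hUp : IsMoorePenroseInv U Up)
    (hrank : U.rank = X.rank) :
    X = C * Up * R := by
  classical
  -- row spans
  have hRrow : Submodule.span ℝ (Set.range R) ≤ Submodule.span ℝ (Set.range X) := by
    apply Submodule.span_mono
    rintro _ ⟨i, rfl⟩
    exact ⟨i.1, by funext j; exact (hR i j).symm⟩
  -- column spans
  have hUcol : Submodule.span ℝ (Set.range Uᵀ) ≤ Submodule.span ℝ (Set.range Rᵀ) := by
    apply Submodule.span_mono
    rintro _ ⟨j, rfl⟩
    exact ⟨j.1, by funext i; exact ((hU i j).trans (hR i j.1).symm).symm⟩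
  -- rank inequalities
  have hRX : R.rank ≤ X.rank := by
    rw [rank_eq_finrank_span_row, rank_eq_finrank_span_row]
    exact Submodule.finrank_mono hRrow
  have hUR : U.rank ≤ R.rank := by
    rw [rank_eq_finrank_span_cols, rank_eq_finrank_span_cols]
    exact Submodule.finrank_mono hUcol
  have hRX' : R.rank = X.rank := le_antisymm hRX (hrank ▸ hUR)
  have hUR' : U.rank = R.rank := le_antisymm hUR (hRX' ▸ hrank.ge)
  -- row span equality
  have hrowEq : Submodule.span ℝ (Set.range R) = Submodule.span ℝ (Set.range X) := by
    apply Submodule.eq_of_le_of_finrank_le hRrow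
    change Module.finrank ℝ (Submodule.span ℝ (Set.range X.row)) ≤ Module.finrank ℝ (Submodule.span ℝ (Set.range R.row))
    rw [← rank_eq_finrank_span_row, ← rank_eq_finrank_span_row]
    exact hRX'.ge
  -- column span equality
  have hcolEq : Submodule.span ℝ (Set.range Uᵀ) = Submodule.span ℝ (Set.range Rᵀ) := by
    apply Submodule.eq_of_le_of_finrank_le hUcol
    change Module.finrank ℝ (Submodule.span ℝ (Set.range R.col)) ≤ Module.finrank ℝ (Submodule.span ℝ (Set.range U.col))
    rw [← rank_eq_finrank_span_cols, ← rank_eq_finrank_span_cols]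
    exact hUR'.ge
  -- X = A * R
  have hA : ∀ i : Fin d₁, ∃ c : {i // i ∈ I} → ℝ, ∑ k, c k • R k = X i := by
    intro i
    have : X i ∈ Submodule.span ℝ (Set.range R) := by
      rw [hrowEq]; exact Submodule.subset_span ⟨i, rfl⟩
    exact (Submodule.mem_span_range_iff_exists_fun ℝ).mp this
  choose A hA using hA
  have hXA : X = Matrix.of A * R := by
    ext i j
    have := congrFun (hA i) j
    simp only [Finset.sum_apply, Pi.smul_apply, smul_eq_mul] at this
    simpa [Matrix.mul_apply] using this.symm
  -- R = U * B
  have hB : ∀ j : Fin d₂, ∃ c : {j // j ∈ J} → ℝ, ∑ k, c k • Uᵀ k = Rᵀ j := by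
    intro j
    have : Rᵀ j ∈ Submodule.span ℝ (Set.range Uᵀ) := by
      rw [hcolEq]; exact Submodule.subset_span ⟨j, rfl⟩
    exact (Submodule.mem_span_range_iff_exists_fun ℝ).mp this
  choose B hB using hB
  have hRB : R = U * Matrix.of (fun k j => B j k) := by
    ext i j
    have := congrFun (hB j) i
    simp only [Finset.sum_apply, Pi.smul_apply, smul_eq_mul, transpose_apply] at this
    rw [Matrix.mul_apply]
    rw [← this]
    simp [mul_comm]
  -- C = A * U
  have hCA : C = Matrix.of A * U := by
    ext i j
    have := congrFun (congrFun hXA i) j.1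
    rw [hC, this, Matrix.mul_apply, Matrix.mul_apply]
    refine Finset.sum_congr rfl fun k _ => ?_
    rw [hU]
    rw [hR]
  -- conclude
  calc X = Matrix.of A * R := hXA
    _ = Matrix.of A * (U * Matrix.of (fun k j => B j k)) := by rw [← hRB]
    _ = Matrix.of A * ((U * Up * U) * Matrix.of (fun k j => B j k)) := by rw [hUp.1]
    _ = (Matrix.of A * U) * Up * (U * Matrix.of (fun k j => B j k)) := by
        simp only [Matrix.mul_assoc]
    _ = C * Up * R := by rw [← hCA, ← hRB]
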